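/- (Identity Principle) Let n ≥ 1, let Ω ⊆ 𝕆_sⁿ be a slice-domain, and let f, g : Ω → 𝕆 both be weak slice regular. Suppose that either there exist I ∈ 𝕊 and a nonempty set V ⊆ Ω ∩ ℂ_Iⁿ that is open in ℂ_Iⁿ with f = g on V, or there exists a nonempty set V ⊆ Ω ∩ ℝⁿ that is open in ℝⁿ with f = g on V. Then f = g on all of Ω. The same conclusion holds if f and g are both strong slice regular. -/

import Mathlib

/-! Octonions via the Cayley–Dickson construction on the quaternions,
the n-dimensional quadratic cone, the slice topology, and slice regularity. -/

noncomputable section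
open Quaternion Topology

/-- The octonions, as `ℍ × ℍ` with the (L²) Euclidean norm and
Cayley–Dickson multiplication. -/
abbrev Oct : Type := WithLp 2 (ℍ × ℍ)

namespace Oct

def c1 (p : Oct) : ℍ := (WithLp.equiv 2 (ℍ × ℍ) p).1
def c2 (p : Oct) : ℍ := (WithLp.equiv 2 (ℍ × ℍ) p).2
def mk (a b : ℍ) : Oct := (WithLp.equiv 2 (ℍ × ℍ)).symm (a, b)

instance : One Oct := ⟨mk 1 0⟩

/-- Cayley–Dickson multiplication. -/
instance : Mul Oct :=
  ⟨fun p q => mk (c1 p * c1 q - star (c2 q) * c2 p) (c2 q * c1 p + c2 p * star (c1 q))⟩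

/-- Octonionic conjugation. -/
instance : Star Oct := ⟨fun p => mk (star (c1 p)) (-(c2 p))⟩

/-- Inverse: `p⁻¹ = ‖p‖⁻² • (star p)` (so `0⁻¹ = 0`). -/
instance : Inv Oct := ⟨fun p => (‖p‖ ^ 2)⁻¹ • star p⟩

/-- The real inner product on `𝕆 ≅ ℝ⁸`, via polarization. -/
def oinner (p q : Oct) : ℝ := (1 / 4) * (‖p + q‖ ^ 2 - ‖p - q‖ ^ 2)

/-- The sphere `𝕊` of imaginary units of the octonions. -/
def Sph : Set Oct := {I | I * I = -1}

/-- The slice complex plane `ℂ_I = ℝ + ℝ I ⊆ 𝕆`. -/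
def CI (I : Oct) : Set Oct := {z | ∃ s t : ℝ, z = s • (1 : Oct) + t • I}

end Oct

open Oct

/-- The point `x + y I ∈ ℂ_Iⁿ ⊆ 𝕆ⁿ`. -/
def aff {n : ℕ} (x y : Fin n → ℝ) (I : Oct) : Fin n → Oct :=
  fun m => x m • (1 : Oct) + y m • I

/-- The embedding `ℝⁿ ⊆ 𝕆ⁿ`. -/
def ofRealn {n : ℕ} (x : Fin n → ℝ) : Fin n → Oct := fun m => x m • (1 : Oct)

/-- The slice `ℂ_Iⁿ ⊆ 𝕆ⁿ`. -/
def slicen (n : ℕ) (I : Oct) : Set (Fin n → Oct) := {q | ∃ x y : Fin n → ℝ, q = aff x y I}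

/-- The `n`-dimensional quadratic cone `𝕆ₛⁿ = ⋃_{I ∈ 𝕊} ℂ_Iⁿ`. -/
def cone (n : ℕ) : Set (Fin n → Oct) := ⋃ I ∈ Sph, slicen n I

/-- The slice topology `τ_s`: a set is open iff its trace on every slice `ℂ_Iⁿ`
is open (expressed via the canonical parametrizations `(x,y) ↦ x + yI`). -/
def τs (n : ℕ) : TopologicalSpace (Fin n → Oct) :=
  ⨆ I : Sph, TopologicalSpace.coinduced
    (fun p : (Fin n → ℝ) × (Fin n → ℝ) => aff p.1 p.2 I.1) inferInstance

/-- A slice-open subset of the quadratic cone. -/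
def SliceOpen (n : ℕ) (Ω : Set (Fin n → Oct)) : Prop :=
  Ω ⊆ cone n ∧ IsOpen[τs n] Ω

/-- A slice-domain: a nonempty slice-connected slice-open subset of the cone. -/
def SliceDomain (n : ℕ) (Ω : Set (Fin n → Oct)) : Prop :=
  SliceOpen n Ω ∧ @IsConnected _ (τs n) Ω

/-- Real-connectedness: `Ω ∩ ℝⁿ` is a (pre)connected subset of `ℝⁿ`. -/
def RealConnected (n : ℕ) (Ω : Set (Fin n → Oct)) : Prop :=
  IsPreconnected {x : Fin n → ℝ | ofRealn x ∈ Ω}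

/-- Axially symmetric subsets of the cone. -/
def AxSymm (n : ℕ) (Ω : Set (Fin n → Oct)) : Prop :=
  ∀ (x y : Fin n → ℝ), ∀ I ∈ Sph, ∀ J ∈ Sph, aff x y I ∈ Ω → aff x y J ∈ Ω

/-- The upper half-space `ℝ²ⁿ₊`: pairs `(x,y)` with `y = 0` or the first
nonzero coordinate of `y` positive. -/
def pos2n (n : ℕ) : Set ((Fin n → ℝ) × (Fin n → ℝ)) :=
  {p | p.2 = 0 ∨ ∃ m : Fin n, 0 < p.2 m ∧ ∀ k : Fin n, k < m → p.2 k = 0}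

/-- `Ω_{s₁}`. -/
def s1 {n : ℕ} (Ω : Set (Fin n → Oct)) : Set ((Fin n → ℝ) × (Fin n → ℝ)) :=
  {p | ∃ I ∈ Sph, aff p.1 p.2 I ∈ Ω}

/-- `Ω_{s₂}`. -/
def s2 {n : ℕ} (Ω : Set (Fin n → Oct)) : Set ((Fin n → ℝ) × (Fin n → ℝ)) :=
  {p | ∃ J ∈ Sph, ∃ K ∈ Sph, J ≠ K ∧ aff p.1 p.2 J ∈ Ω ∧ aff p.1 p.2 K ∈ Ω}

/-- Slice functions: induced on `Ω_{s₂}⁺` by a pair `(F₁, F₂)` via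
`f(x + yI) = F₁(x,y) + I·F₂(x,y)`. -/
def IsSliceFun (n : ℕ) (Ω : Set (Fin n → Oct)) (f : (Fin n → Oct) → Oct) : Prop :=
  ∃ F₁ F₂ : (Fin n → ℝ) × (Fin n → ℝ) → Oct,
    ∀ x y : Fin n → ℝ, (x, y) ∈ s2 Ω ∩ pos2n n → ∀ I ∈ Sph, aff x y I ∈ Ω →
      f (aff x y I) = F₁ (x, y) + I * F₂ (x, y)

/-- Holomorphy of a function of `n` slice variables, read through the
parametrization `(x,y) ↦ x + yI`: continuous partial derivatives (i.e. `C¹`)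
and the Cauchy–Riemann equations `(∂/∂xₘ + I ∂/∂yₘ) g = 0` on `U`. -/
def Holo (n : ℕ) (I : Oct) (g : (Fin n → ℝ) × (Fin n → ℝ) → Oct)
    (U : Set ((Fin n → ℝ) × (Fin n → ℝ))) : Prop :=
  ContDiffOn ℝ 1 g U ∧
  ∀ p ∈ U, ∀ m : Fin n,
    fderiv ℝ g p (Pi.single m 1, 0) + I * fderiv ℝ g p (0, Pi.single m 1) = 0

/-- Weak slice regularity: each restriction `f|_{Ω ∩ ℂ_Iⁿ}` is holomorphic. -/
def WSliceReg (n : ℕ) (Ω : Set (Fin n → Oct)) (f : (Fin n → Oct) → Oct) : Prop :=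
  ∀ I ∈ Sph, Holo n I (fun p => f (aff p.1 p.2 I)) {p | aff p.1 p.2 I ∈ Ω}

/-- The complex structure `σ(a,b) = (−b,a)` on `𝕆²`. -/
def sigma2 : Oct × Oct → Oct × Oct := fun w => (-w.2, w.1)

/-- Holomorphic stem maps: `F : V → 𝕆²` extends to a `C¹` map `G` on an open
neighborhood `U ⊇ V` satisfying `(∂/∂xₘ + σ ∂/∂yₘ) G = 0` on `U`. -/
def StemHolo (n : ℕ) (V : Set ((Fin n → ℝ) × (Fin n → ℝ)))
    (F : (Fin n → ℝ) × (Fin n → ℝ) → Oct × Oct) : Prop :=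
  ∃ (U : Set ((Fin n → ℝ) × (Fin n → ℝ))) (G : (Fin n → ℝ) × (Fin n → ℝ) → Oct × Oct),
    IsOpen U ∧ V ⊆ U ∧ Set.EqOn G F V ∧ ContDiffOn ℝ 1 G U ∧
    ∀ p ∈ U, ∀ m : Fin n,
      fderiv ℝ G p (Pi.single m 1, 0) + sigma2 (fderiv ℝ G p (0, Pi.single m 1)) = 0

/-- Strong slice regularity: `f` is induced by a holomorphic stem map on `Ω_{s₁}`. -/
def SSliceReg (n : ℕ) (Ω : Set (Fin n → Oct)) (f : (Fin n → Oct) → Oct) : Prop :=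
  ∃ F : (Fin n → ℝ) × (Fin n → ℝ) → Oct × Oct, StemHolo n (s1 Ω) F ∧
    ∀ x y : Fin n → ℝ, ∀ I ∈ Sph, aff x y I ∈ Ω →
      f (aff x y I) = (F (x, y)).1 + I * (F (x, y)).2

/-- An s-basis `{I, J, K}` of the octonions. -/
def IsSBasis (I J K : Oct) : Prop :=
  I ∈ Sph ∧ J ∈ Sph ∧ K ∈ Sph ∧
  LinearIndependent ℝ ![(1 : Oct), I, J, I * J, K, J * K, I * K, (I * J) * K] ∧
  Submodule.span ℝ (Set.range ![(1 : Oct), I, J, I * J, K, J * K, I * K, (I * J) * K]) = ⊤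

/-- Iterated left multiplication `L_w^β = (L_{w₁})^{β₁} ∘ ⋯ ∘ (L_{wₙ})^{βₙ}`. -/
def Lpow {n : ℕ} (w : Fin n → Oct) (β : Fin n → ℕ) : Oct → Oct :=
  fun a => (List.finRange n).foldr (fun ℓ c => (fun o => w ℓ * o)^[β ℓ] c) a

/-- The `*`-power `(q − p)^{*α} a = ∑_{β ≤ α} C(α,β) L_q^β (L_{−p}^{α−β} a)`. -/
def starPow {n : ℕ} (p : Fin n → Oct) (α : Fin n → ℕ) (a : Oct) (q : Fin n → Oct) : Oct :=
  ∑ β ∈ Finset.Iic α, (∏ ℓ, (α ℓ).choose (β ℓ)) • Lpow q β (Lpow (-p) (α - β) a)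

/-- The `ℓ`-th slice derivative `∂_ℓ f (x + w) = (∂/∂x_ℓ) f (x + w)`. -/
def sderiv {n : ℕ} (ℓ : Fin n) (f : (Fin n → Oct) → Oct) : (Fin n → Oct) → Oct :=
  fun q => deriv (fun t : ℝ => f (fun m => q m + (if m = ℓ then t else 0) • (1 : Oct))) 0

/-- The iterated slice derivative `f^{(α)} = (∂₁)^{α₁} ⋯ (∂ₙ)^{αₙ} f`. -/
def sderivMulti {n : ℕ} (α : Fin n → ℕ) (f : (Fin n → Oct) → Oct) : (Fin n → Oct) → Oct :=
  (List.finRange n).foldr (fun ℓ g => (sderiv ℓ)^[α ℓ] g) f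

/-- The slice-polydisc `P̃(q₀, r)` (relative to `I ∈ 𝕊` with `q₀ ∈ ℂ_Iⁿ`):
points `x + yJ` with `x ± yI` in the closed polydisc `P_I(q₀, r)`. -/
def polyDisc {n : ℕ} (q₀ : Fin n → Oct) (I : Oct) (r : Fin n → ℝ) : Set (Fin n → Oct) :=
  {q | ∃ x y : Fin n → ℝ, ∃ J ∈ Sph, q = aff x y J ∧
        (∀ ℓ, ‖aff x y I ℓ - q₀ ℓ‖ ≤ r ℓ) ∧ (∀ ℓ, ‖aff x (-y) I ℓ - q₀ ℓ‖ ≤ r ℓ)}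

set_option maxHeartbeats 1000000

/-! ### Auxiliary lemmas -/

namespace Oct

@[simp] lemma c1_mk (a b : ℍ) : c1 (mk a b) = a := rfl
@[simp] lemma c2_mk (a b : ℍ) : c2 (mk a b) = b := rfl
@[simp] lemma mk_c1c2 (p : Oct) : mk (c1 p) (c2 p) = p := rfl
lemma oct_ext {p q : Oct} (h1 : c1 p = c1 q) (h2 : c2 p = c2 q) : p = q := by
  rw [← mk_c1c2 p, ← mk_c1c2 q, h1, h2]
@[simp] lemma c1_add (p q : Oct) : c1 (p + q) = c1 p + c1 q := rfl
@[simp] lemma c2_add (p q : Oct) : c2 (p + q) = c2 p + c2 q := rfl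
@[simp] lemma c1_neg (p : Oct) : c1 (-p) = -c1 p := rfl
@[simp] lemma c2_neg (p : Oct) : c2 (-p) = -c2 p := rfl
@[simp] lemma c1_sub (p q : Oct) : c1 (p - q) = c1 p - c1 q := rfl
@[simp] lemma c2_sub (p q : Oct) : c2 (p - q) = c2 p - c2 q := rfl
@[simp] lemma c1_smul (t : ℝ) (p : Oct) : c1 (t • p) = t • c1 p := rfl
@[simp] lemma c2_smul (t : ℝ) (p : Oct) : c2 (t • p) = t • c2 p := rfl
@[simp] lemma c1_zero : c1 0 = 0 := rfl
@[simp] lemma c2_zero : c2 0 = 0 := rfl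
@[simp] lemma c1_one : c1 1 = 1 := rfl
@[simp] lemma c2_one : c2 1 = 0 := rfl
@[simp] lemma c1_mul (p q : Oct) : c1 (p * q) = c1 p * c1 q - star (c2 q) * c2 p := rfl
@[simp] lemma c2_mul (p q : Oct) : c2 (p * q) = c2 q * c1 p + c2 p * star (c1 q) := rfl

lemma one_ne_zero' : (1 : Oct) ≠ 0 := by
  intro h
  have : (1:ℍ) = 0 := congrArg c1 h
  exact one_ne_zero this

lemma mul_add_left (I p q : Oct) : I * (p + q) = I * p + I * q := by
  apply oct_ext <;> simp <;> noncomm_ring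
lemma mul_smul_left (I : Oct) (t : ℝ) (p : Oct) : I * (t • p) = t • (I * p) := by
  apply oct_ext <;>
    (simp only [c1_mul, c2_mul, c1_smul, c2_smul]
     simp only [Quaternion.star_smul, smul_sub, smul_add, mul_smul_comm, smul_mul_assoc])
lemma add_mul_right (p q I : Oct) : (p + q) * I = p * I + q * I := by
  apply oct_ext <;> simp <;> noncomm_ring
lemma smul_mul_right (t : ℝ) (p I : Oct) : (t • p) * I = t • (p * I) := by
  apply oct_ext <;>
    (simp only [c1_mul, c2_mul, c1_smul, c2_smul]
     simp only [Quaternion.star_smul, smul_sub, smul_add, mul_smul_comm, smul_mul_assoc])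
@[simp] lemma mul_zero_left (I : Oct) : I * 0 = 0 := by
  apply oct_ext <;> simp
@[simp] lemma mul_one_right (I : Oct) : I * 1 = I := by
  apply oct_ext <;> simp
@[simp] lemma one_mul_left (I : Oct) : 1 * I = I := by
  apply oct_ext <;> simp
lemma mul_neg_left (I p : Oct) : I * (-p) = -(I * p) := by
  apply oct_ext <;> simp <;> abel
lemma neg_mul_right (I p : Oct) : (-p) * I = -(p * I) := by
  apply oct_ext <;> simp <;> abel
lemma mul_sub_left (I p q : Oct) : I * (p - q) = I * p - I * q := by
  apply oct_ext <;> simp <;> noncomm_ring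

lemma sph_neg {I : Oct} (hI : I ∈ Sph) : -I ∈ Sph := by
  have : (-I) * (-I) = I * I := by rw [neg_mul_right, mul_neg_left, neg_neg]
  simpa [Sph, this] using hI

/-- `L_I² = -1` for `I ∈ 𝕊`. -/
lemma LIsq {I : Oct} (hI : I ∈ Sph) (x : Oct) : I * (I * x) = -x := by
  have hI' : I * I = -1 := hI
  have e1 : c1 I * c1 I - star (c2 I) * c2 I = -1 := by
    have := congrArg c1 hI'; simpa using this
  have e2 : c2 I * c1 I + c2 I * star (c1 I) = 0 := by
    have := congrArg c2 hI'; simpa using this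
  set A := c1 I with hA
  set B := c2 I with hB
  set C := c1 x with hC
  set D := c2 x with hD
  set N : ℝ := normSq B with hN
  set r : ℝ := 2 * A.re with hr
  have hre : B * (r : ℍ) = 0 := by
    rw [← Quaternion.self_add_star' A, mul_add]; exact e2
  have hr' : A + star A = ((r : ℝ) : ℍ) := Quaternion.self_add_star' A
  have hBB : star B * B = ((N : ℝ) : ℍ) := Quaternion.star_mul_self B
  have hBB2 : B * star B = ((N : ℝ) : ℍ) := Quaternion.self_mul_star B
  have hsq : A * A = ((N : ℝ) : ℍ) - 1 := by
    rw [sub_eq_iff_eq_add.mp e1, hBB]; abel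
  apply oct_ext
  · show A * (A * C - star D * B) - star (D * A + B * star C) * B = -C
    calc A * (A * C - star D * B) - star (D * A + B * star C) * B
        = (A * A) * C - (A + star A) * (star D * B) - C * (star B * B) := by
          simp only [star_add, star_mul, star_star]; noncomm_ring
      _ = (((N:ℝ):ℍ) - 1) * C - ((r:ℝ):ℍ) * (star D * B) - C * ((N:ℝ):ℍ) := by
          rw [hsq, hr', hBB]
      _ = (((N:ℝ):ℍ) - 1) * C - star D * (B * ((r:ℝ):ℍ)) - C * ((N:ℝ):ℍ) := by
          rw [Quaternion.coe_commutes, mul_assoc]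
      _ = (((N:ℝ):ℍ) - 1) * C - C * ((N:ℝ):ℍ) := by rw [hre, mul_zero, sub_zero]
      _ = -C := by
          rw [sub_mul, one_mul, Quaternion.coe_mul_eq_smul, Quaternion.mul_coe_eq_smul]; abel
  · show (D * A + B * star C) * A + B * star (A * C - star D * B) = -D
    calc (D * A + B * star C) * A + B * star (A * C - star D * B)
        = D * (A * A) + B * (star C * (A + star A)) - (B * star B) * D := by
          simp only [star_sub, star_mul, star_star]; noncomm_ring
      _ = D * (((N:ℝ):ℍ) - 1) + B * (star C * ((r:ℝ):ℍ)) - ((N:ℝ):ℍ) * D := by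
          rw [hsq, hr', hBB2]
      _ = D * (((N:ℝ):ℍ) - 1) + (B * ((r:ℝ):ℍ)) * star C - ((N:ℝ):ℍ) * D := by
          rw [← Quaternion.coe_commutes, ← mul_assoc]
      _ = D * (((N:ℝ):ℍ) - 1) - ((N:ℝ):ℍ) * D := by rw [hre, zero_mul, add_zero]
      _ = -D := by
          rw [mul_sub, mul_one, Quaternion.coe_mul_eq_smul, Quaternion.mul_coe_eq_smul]; abel

/-- The sphere of imaginary units is nonempty. -/
lemma sph_nonempty : ∃ I : Oct, I ∈ Sph := by
  refine ⟨mk ⟨0,1,0,0⟩ 0, ?_⟩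
  show (mk ⟨0,1,0,0⟩ 0) * (mk ⟨0,1,0,0⟩ 0) = -1
  apply oct_ext
  · show (⟨0,1,0,0⟩ : ℍ) * ⟨0,1,0,0⟩ - star 0 * 0 = c1 (-1)
    have : c1 (-1 : Oct) = -1 := by
      have : (-1 : Oct) = -(mk 1 0) := rfl
      rw [this]; simp
    rw [this]
    ext <;> simp [Quaternion.ext_iff]
  · show 0 * _ + 0 * _ = c2 (-1)
    have : c2 (-1 : Oct) = 0 := by
      have : (-1 : Oct) = -(mk 1 0) := rfl
      rw [this]; simp
    rw [this]; simp

/-- Linear independence of `1, I` for `I ∈ 𝕊`. -/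
lemma indep1I {I : Oct} (hI : I ∈ Sph) {s t : ℝ}
    (h : s • (1 : Oct) + t • I = 0) : s = 0 ∧ t = 0 := by
  have hII : I * I = -1 := hI
  have hmul : s • I + t • (I * I) = 0 := by
    have := congrArg (fun z => I * z) h
    simpa [mul_add_left, mul_smul_left] using this
  rw [hII] at hmul
  have e2 : s • I = t • (1 : Oct) := by
    have : s • I - t • (1:Oct) = 0 := by
      rw [sub_eq_add_neg, ← smul_neg]; exact hmul
    exact sub_eq_zero.mp this
  have e1 : s • (1 : Oct) = -(t • I) := eq_neg_of_add_eq_zero_left h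
  have key : (s*s + t*t) • (1:Oct) = 0 := by
    have step : (s*s) • (1:Oct) = -((t*t) • (1:Oct)) := by
      calc (s*s) • (1:Oct) = s • (s • (1:Oct)) := mul_smul s s 1
        _ = s • (-(t • I)) := by rw [e1]
        _ = -(t • (s • I)) := by rw [smul_neg, smul_comm s t]
        _ = -(t • (t • (1:Oct))) := by rw [e2]
        _ = -((t*t) • (1:Oct)) := by rw [← mul_smul]
    rw [add_smul, step, neg_add_cancel]
  have hst : s*s + t*t = 0 := by
    rcases smul_eq_zero.mp key with hc | hc
    · exact hc
    · exact absurd hc one_ne_zero'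
  constructor <;> nlinarith [sq_nonneg s, sq_nonneg t]

/-- Linear independence of `1, J, K` for distinct non-conjugate imaginary units. -/
lemma indep1JK {J K : Oct} (hJ : J ∈ Sph) (hK : K ∈ Sph) (hKJ : K ≠ J) (hKJ' : K ≠ -J)
    {s t r : ℝ} (h : s • (1 : Oct) + t • J + r • K = 0) : s = 0 ∧ t = 0 ∧ r = 0 := by
  have hr0 : r = 0 := by
    by_contra hr
    set a : ℝ := -s/r with ha
    set b : ℝ := -t/r with hb
    have hKab : K = a • (1:Oct) + b • J := by
      have : r • K = (-s) • (1:Oct) + (-t) • J := by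
        rw [neg_smul, neg_smul]
        have := eq_neg_of_add_eq_zero_right h
        rw [this]; abel
      have := congrArg (fun z => (r⁻¹ : ℝ) • z) this
      simp only [smul_add, ← mul_smul] at this
      rw [inv_mul_cancel₀ hr, one_smul] at this
      rw [this, ha, hb]
      rw [div_eq_inv_mul, div_eq_inv_mul, mul_smul, mul_smul]
    have hJJ : J * J = -1 := hJ
    have hKK : K * K = -1 := hK
    have expand : K * K = ((a*a - b*b) • (1:Oct)) + ((2*(a*b)) • J) := by
      rw [hKab, add_mul_right, smul_mul_right, smul_mul_right, mul_add_left, mul_add_left,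
        mul_smul_left, mul_smul_left, mul_smul_left, mul_smul_left, one_mul_left, one_mul_left,
        mul_one_right, hJJ]
      simp only [smul_add, smul_neg, smul_smul]
      module
    have hz : (a*a - b*b + 1) • (1:Oct) + (2*(a*b)) • J = 0 := by
      rw [add_smul, one_smul]
      have : ((a*a - b*b) • (1:Oct)) + ((2*(a*b)) • J) = -1 := by rw [← expand, hKK]
      calc (a * a - b * b) • (1:Oct) + 1 + (2 * (a * b)) • J
          = (((a*a - b*b) • (1:Oct)) + ((2*(a*b)) • J)) + 1 := by abel
        _ = -1 + 1 := by rw [this]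
        _ = 0 := by abel
    obtain ⟨h1, h2⟩ := indep1I hJ hz
    have hab : a = 0 ∨ b = 0 := by
      rcases mul_eq_zero.mp (by linarith : a * b = 0) with h | h
      · exact Or.inl h
      · exact Or.inr h
    rcases hab with h0 | h0
    · have hbb : b*b = 1 := by nlinarith
      rcases mul_self_eq_one_iff.mp hbb with hb1 | hb1
      · apply hKJ
        rw [hKab, h0, hb1, zero_smul, zero_add, one_smul]
      · apply hKJ'
        rw [hKab, h0, hb1, zero_smul, zero_add, neg_smul, one_smul]
    · nlinarith
  refine ⟨?_, ?_, hr0⟩ <;>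
  · have h' : s • (1 : Oct) + t • J = 0 := by
      rw [hr0, zero_smul, add_zero] at h; exact h
    obtain ⟨h1, h2⟩ := indep1I hJ h'
    first | exact h1 | exact h2

end Oct


section AffSlice
open Oct

variable {n : ℕ}

lemma aff_zero (x : Fin n → ℝ) (I : Oct) : aff x 0 I = ofRealn x := by
  funext m; simp [aff, ofRealn]

lemma aff_negI (x y : Fin n → ℝ) (I : Oct) : aff x y (-I) = aff x (-y) I := by
  funext m; simp [aff, smul_neg, neg_smul]

lemma aff_inj {I : Oct} (hI : I ∈ Sph) {x y x' y' : Fin n → ℝ}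
    (h : aff x y I = aff x' y' I) : x = x' ∧ y = y' := by
  have hm : ∀ m, x m = x' m ∧ y m = y' m := by
    intro m
    have hcm : x m • (1:Oct) + y m • I = x' m • (1:Oct) + y' m • I := congrFun h m
    have h0 : (x m - x' m) • (1:Oct) + (y m - y' m) • I = 0 := by
      rw [sub_smul, sub_smul, sub_add_sub_comm, hcm, sub_self]
    obtain ⟨h1, h2⟩ := Oct.indep1I hI h0
    exact ⟨sub_eq_zero.mp h1, sub_eq_zero.mp h2⟩
  exact ⟨funext fun m => (hm m).1, funext fun m => (hm m).2⟩

lemma aff_cross {J K : Oct} (hJ : J ∈ Sph) (hK : K ∈ Sph) (hKJ : K ≠ J) (hKJ' : K ≠ -J)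
    {x y x' y' : Fin n → ℝ} (h : aff x y K = aff x' y' J) : y = 0 ∧ y' = 0 ∧ x = x' := by
  have hm : ∀ m, y m = 0 ∧ y' m = 0 ∧ x m = x' m := by
    intro m
    have hcm : x m • (1:Oct) + y m • K = x' m • (1:Oct) + y' m • J := congrFun h m
    have h0 : (x m - x' m) • (1:Oct) + (-(y' m)) • J + (y m) • K = 0 := by
      rw [sub_smul, neg_smul]
      have e : x m • (1:Oct) - x' m • (1:Oct) + -(y' m • J) + y m • K
          = (x m • (1:Oct) + y m • K) - (x' m • (1:Oct) + y' m • J) := by abel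
      rw [e, hcm, sub_self]
    obtain ⟨h1, h2, h3⟩ := Oct.indep1JK hJ hK hKJ hKJ' h0
    exact ⟨h3, neg_eq_zero.mp h2, sub_eq_zero.mp h1⟩
  refine ⟨funext fun m => (hm m).1, funext fun m => (hm m).2.1, funext fun m => (hm m).2.2⟩

lemma isOpen_tau_iff {U : Set (Fin n → Oct)} :
    IsOpen[τs n] U ↔
      ∀ I : Oct, I ∈ Sph → IsOpen {p : (Fin n → ℝ) × (Fin n → ℝ) | aff p.1 p.2 I ∈ U} := by
  show IsOpen[⨆ I : Sph, TopologicalSpace.coinduced _ inferInstance] U ↔ _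
  rw [isOpen_iSup_iff]
  constructor
  · intro h I hI
    exact isOpen_coinduced.mp (h ⟨I, hI⟩)
  · intro h I
    exact isOpen_coinduced.mpr (h I.1 I.2)

end AffSlice


section Analytic
open Oct

variable {n : ℕ}

/-- Left multiplication by `I` as a continuous linear map. -/
def LIc (I : Oct) : Oct →L[ℝ] Oct :=
  LinearMap.toContinuousLinearMap
    { toFun := fun x => I * x
      map_add' := Oct.mul_add_left I
      map_smul' := fun t x => Oct.mul_smul_left I t x }

@[simp] lemma LIc_apply (I x : Oct) : LIc I x = I * x := rfl

/-- Decomposition of a vector in `ℝⁿ × ℝⁿ` in the standard basis. -/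
lemma vec_decomp (v : (Fin n → ℝ) × (Fin n → ℝ)) :
    v = ∑ m : Fin n, ((v.1 m) • ((Pi.single m 1 : Fin n → ℝ), (0 : Fin n → ℝ))
      + (v.2 m) • ((0 : Fin n → ℝ), (Pi.single m 1 : Fin n → ℝ))) := by
  have key : ∀ w : Fin n → ℝ, ∑ m : Fin n, w m • (Pi.single m 1 : Fin n → ℝ) = w := by
    intro w; funext j
    rw [Finset.sum_apply]
    simp only [Pi.smul_apply, Pi.single_apply, smul_eq_mul, mul_ite, mul_one, mul_zero]
    simp [Finset.sum_ite_eq]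
  apply Prod.ext <;>
    simp [Prod.fst_sum, Prod.snd_sum, Prod.fst_add, Prod.snd_add, Prod.smul_fst, Prod.smul_snd,
      key]

/-- Cauchy–Riemann in coordinate directions implies complex-linearity of the differential. -/
lemma cr_rotate {I : Oct} (hI : I ∈ Sph) (D : ((Fin n → ℝ) × (Fin n → ℝ)) →L[ℝ] Oct)
    (hcr : ∀ m : Fin n, D (Pi.single m 1, 0) + I * D (0, Pi.single m 1) = 0)
    (u : (Fin n → ℝ) × (Fin n → ℝ)) :
    D (-u.2, u.1) = I * D u := by
  have hb : ∀ m : Fin n, D (0, Pi.single m 1) = I * D (Pi.single m 1, 0) := by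
    intro m
    have h := congrArg (fun z => I * z) (hcr m)
    simp only [Oct.mul_add_left, Oct.LIsq hI, Oct.mul_zero_left] at h
    have : I * D (Pi.single m 1, 0) - D (0, Pi.single m 1) = 0 := by
      rw [← h]; abel
    exact (sub_eq_zero.mp this).symm
  have hDu : D u = ∑ m : Fin n,
      ((u.1 m) • D (Pi.single m 1, 0) + (u.2 m) • D (0, Pi.single m 1)) := by
    conv_lhs => rw [vec_decomp u]
    rw [map_sum]
    exact Finset.sum_congr rfl fun m _ => by rw [map_add, map_smul, map_smul]
  have hDJu : D (-u.2, u.1) = ∑ m : Fin n,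
      ((-(u.2 m)) • D (Pi.single m 1, 0) + (u.1 m) • D (0, Pi.single m 1)) := by
    conv_lhs => rw [vec_decomp (⟨-u.2, u.1⟩ : (Fin n → ℝ) × (Fin n → ℝ))]
    rw [map_sum]
    exact Finset.sum_congr rfl fun m _ => by rw [map_add, map_smul, map_smul]; simp
  rw [hDu, hDJu]
  rw [show (I * ∑ m : Fin n,
      ((u.1 m) • D (Pi.single m 1, 0) + (u.2 m) • D (0, Pi.single m 1)))
      = LIc I (∑ m : Fin n,
      ((u.1 m) • D (Pi.single m 1, 0) + (u.2 m) • D (0, Pi.single m 1))) from rfl]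
  rw [map_sum]
  refine Finset.sum_congr rfl fun m _ => ?_
  rw [map_add, map_smul, map_smul]
  simp only [LIc_apply, hb m, Oct.LIsq hI]
  module

/-- Transfer of a real derivative which is complex-linear to a complex derivative. -/
lemma hasDerivAt_of_real {φ : ℂ → ℂ} {A : ℂ →L[ℝ] ℂ} {z c : ℂ}
    (hA : ∀ w, A w = w * c) (h : HasFDerivAt φ A z) : HasDerivAt φ c z := by
  rw [hasDerivAt_iff_hasFDerivAt]
  rw [hasFDerivAt_iff_isLittleO_nhds_zero] at h ⊢
  simpa [hA, smul_eq_mul, mul_comm] using h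

/-- The affine complex line `z ↦ p₀ + re z • u + im z • Ju`. -/
def lineL (p₀ u : (Fin n → ℝ) × (Fin n → ℝ)) (z : ℂ) : (Fin n → ℝ) × (Fin n → ℝ) :=
  p₀ + z.re • u + z.im • (-u.2, u.1)

/-- The linear part of `lineL` as a continuous linear map. -/
def lineCLM (u : (Fin n → ℝ) × (Fin n → ℝ)) : ℂ →L[ℝ] (Fin n → ℝ) × (Fin n → ℝ) :=
  Complex.reCLM.smulRight u + Complex.imCLM.smulRight (-u.2, u.1)

lemma lineCLM_apply (u : (Fin n → ℝ) × (Fin n → ℝ)) (z : ℂ) :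
    lineCLM u z = z.re • u + z.im • (-u.2, u.1) := by
  simp [lineCLM]

lemma lineL_eq (p₀ u : (Fin n → ℝ) × (Fin n → ℝ)) :
    lineL p₀ u = fun z => p₀ + lineCLM u z := by
  funext z; rw [lineL, lineCLM_apply, add_assoc]

lemma hasFDerivAt_lineL (p₀ u : (Fin n → ℝ) × (Fin n → ℝ)) (z : ℂ) :
    HasFDerivAt (lineL p₀ u) (lineCLM u) z := by
  rw [lineL_eq]
  exact (lineCLM u).hasFDerivAt.const_add p₀

lemma continuous_lineL (p₀ u : (Fin n → ℝ) × (Fin n → ℝ)) : Continuous (lineL p₀ u) := by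
  rw [lineL_eq]
  exact continuous_const.add (lineCLM u).continuous

lemma lineL_affine (p₀ u : (Fin n → ℝ) × (Fin n → ℝ)) {a b : ℝ} (hab : a + b = 1) (z w : ℂ) :
    lineL p₀ u (a • z + b • w) = a • lineL p₀ u z + b • lineL p₀ u w := by
  simp only [lineL_eq]
  rw [map_add, map_smul, map_smul]
  rw [smul_add, smul_add, ← add_assoc]
  have : p₀ = a • p₀ + b • p₀ := by rw [← add_smul, hab, one_smul]
  conv_lhs => rw [this]
  module

lemma convex_lineL_preimage (p₀ u : (Fin n → ℝ) × (Fin n → ℝ))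
    {s : Set ((Fin n → ℝ) × (Fin n → ℝ))} (hs : Convex ℝ s) :
    Convex ℝ (lineL p₀ u ⁻¹' s) := by
  intro z hz w hw a b ha hb hab
  show lineL p₀ u (a • z + b • w) ∈ s
  rw [lineL_affine p₀ u hab]
  exact hs hz hw ha hb hab

/-- Main one-variable propagation lemma: a slice-holomorphic function vanishing
frequently near a point of a complex line vanishes along the whole line piece. -/
lemma line_zero {I : Oct} (hI : I ∈ Sph) {h : (Fin n → ℝ) × (Fin n → ℝ) → Oct}
    {O : Set ((Fin n → ℝ) × (Fin n → ℝ))}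
    (hdiff : ∀ p ∈ O, DifferentiableAt ℝ h p)
    (hcr : ∀ p ∈ O, ∀ m : Fin n,
      fderiv ℝ h p (Pi.single m 1, 0) + I * fderiv ℝ h p (0, Pi.single m 1) = 0)
    (p₀ u : (Fin n → ℝ) × (Fin n → ℝ)) {T : Set ℂ} (hT : IsOpen T) (hTp : IsPreconnected T)
    (hmaps : ∀ z ∈ T, lineL p₀ u z ∈ O)
    {z₀ : ℂ} (hz₀ : z₀ ∈ T) (hfreq : ∃ᶠ z in 𝓝[≠] z₀, h (lineL p₀ u z) = 0) :
    ∀ z ∈ T, h (lineL p₀ u z) = 0 := by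
  intro z1 hz1
  rw [← Module.forall_dual_apply_eq_zero_iff ℝ (h (lineL p₀ u z1))]
  intro lam
  set lc : Oct →L[ℝ] ℝ := LinearMap.toContinuousLinearMap lam with hlc
  set Λ : Oct →L[ℝ] ℂ :=
    Complex.ofRealCLM.comp lc - Complex.I • (Complex.ofRealCLM.comp (lc.comp (LIc I))) with hΛdef
  have hΛ : ∀ v : Oct, Λ v = (lc v : ℂ) - Complex.I * (lc (I * v) : ℂ) := by
    intro v
    simp [hΛdef]
  have hΛI : ∀ v : Oct, Λ (I * v) = Complex.I * Λ v := by
    intro v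
    rw [hΛ, hΛ, Oct.LIsq hI, map_neg]
    push_cast
    ring_nf
    simp only [Complex.I_sq]
    ring
  have hΛre : ∀ v : Oct, (Λ v).re = lc v := by
    intro v
    rw [hΛ]
    simp
  set φ : ℂ → ℂ := fun z => Λ (h (lineL p₀ u z)) with hφ
  have hdφ : DifferentiableOn ℂ φ T := by
    intro z hz
    have hp := hmaps z hz
    have Dh : HasFDerivAt h (fderiv ℝ h (lineL p₀ u z)) (lineL p₀ u z) :=
      (hdiff _ hp).hasFDerivAt
    have comp1 : HasFDerivAt (fun w => h (lineL p₀ u w))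
        ((fderiv ℝ h (lineL p₀ u z)).comp (lineCLM u)) z :=
      Dh.comp z (hasFDerivAt_lineL p₀ u z)
    have comp2 : HasFDerivAt φ
        (Λ.comp ((fderiv ℝ h (lineL p₀ u z)).comp (lineCLM u))) z :=
      Λ.hasFDerivAt.comp z comp1
    set D := fderiv ℝ h (lineL p₀ u z) with hD
    set A := Λ.comp (D.comp (lineCLM u)) with hAdef
    have hrot := cr_rotate hI D (hcr _ hp)
    have hA1 : A 1 = Λ (D u) := by
      simp [hAdef, lineCLM_apply, Complex.one_re, Complex.one_im]
    have hAw : ∀ w, A w = w * (A 1) := by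
      intro w
      rw [hA1]
      have : A w = Λ (D (w.re • u + w.im • (-u.2, u.1))) := by
        simp [hAdef, lineCLM_apply]
      rw [this]
      simp only [map_add, map_smul]
      rw [hrot u, hΛI]
      rw [Complex.real_smul, Complex.real_smul]
      conv_rhs => rw [← Complex.re_add_im w]
      ring
    exact ((hasDerivAt_of_real hAw comp2).differentiableAt).differentiableWithinAt
  have han := hdφ.analyticOnNhd hT
  have hfreqφ : ∃ᶠ z in 𝓝[≠] z₀, φ z = 0 :=
    hfreq.mono fun z hz => by rw [hφ]; simp only [hz, map_zero]
  have hzero := han.eqOn_zero_of_preconnected_of_frequently_eq_zero hTp hz₀ hfreqφ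
  have : φ z1 = 0 := hzero hz1
  have hre : lc (h (lineL p₀ u z1)) = 0 := by
    rw [← hΛre]
    show (φ z1).re = 0
    rw [this, Complex.zero_re]
  simpa [hlc] using hre


@[simp] lemma lineL_zero (p₀ u : (Fin n → ℝ) × (Fin n → ℝ)) : lineL p₀ u 0 = p₀ := by
  simp [lineL]

@[simp] lemma lineL_one (p₀ u : (Fin n → ℝ) × (Fin n → ℝ)) : lineL p₀ u 1 = p₀ + u := by
  simp [lineL]

lemma lineL_real (p₀ u : (Fin n → ℝ) × (Fin n → ℝ)) (t : ℝ) :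
    lineL p₀ u (t : ℂ) = p₀ + t • u := by
  simp [lineL]

/-- Propagation of vanishing through a convex ball. -/
lemma zero_on_ball {I : Oct} (hI : I ∈ Sph) {h : (Fin n → ℝ) × (Fin n → ℝ) → Oct}
    {O : Set ((Fin n → ℝ) × (Fin n → ℝ))}
    (hdiff : ∀ p ∈ O, DifferentiableAt ℝ h p)
    (hcr : ∀ p ∈ O, ∀ m : Fin n,
      fderiv ℝ h p (Pi.single m 1, 0) + I * fderiv ℝ h p (0, Pi.single m 1) = 0)
    {c : (Fin n → ℝ) × (Fin n → ℝ)} {ε : ℝ} (hball : Metric.ball c ε ⊆ O)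
    {q : (Fin n → ℝ) × (Fin n → ℝ)} {δ : ℝ} (hδ : 0 < δ)
    (hqball : Metric.ball q δ ⊆ Metric.ball c ε)
    (hzero : ∀ p ∈ Metric.ball q δ, h p = 0) :
    ∀ p ∈ Metric.ball c ε, h p = 0 := by
  intro w hw
  set u := w - q with hu
  have hq : q ∈ Metric.ball c ε := hqball (Metric.mem_ball_self hδ)
  set T : Set ℂ := lineL q u ⁻¹' Metric.ball c ε with hT
  have hTopen : IsOpen T := (Metric.isOpen_ball).preimage (continuous_lineL q u)
  have hTconv : Convex ℝ T := convex_lineL_preimage q u (convex_ball c ε)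
  have h0T : (0 : ℂ) ∈ T := by
    simp only [hT, Set.mem_preimage, lineL_zero]; exact hq
  have h1T : (1 : ℂ) ∈ T := by
    simp only [hT, Set.mem_preimage, lineL_one]
    rw [hu, add_sub_cancel]
    exact hw
  have hev : ∀ᶠ z in 𝓝 (0 : ℂ), h (lineL q u z) = 0 := by
    have hcont : ContinuousAt (lineL q u) 0 := (continuous_lineL q u).continuousAt
    have hmem : Metric.ball q δ ∈ 𝓝 (lineL q u 0) := by
      rw [lineL_zero]; exact Metric.ball_mem_nhds q hδ
    exact (hcont.eventually_mem hmem).mono fun z hz => hzero _ hz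
  have hfreq : ∃ᶠ z in 𝓝[≠] (0:ℂ), h (lineL q u z) = 0 :=
    (hev.filter_mono nhdsWithin_le_nhds).frequently
  have := line_zero hI hdiff hcr q u hTopen hTconv.isPreconnected
    (fun z hz => hball hz) h0T hfreq 1 h1T
  rw [lineL_one, hu, add_sub_cancel] at this
  exact this

/-- A holomorphic function vanishing on the real trace of a ball vanishes on the ball. -/
lemma zero_of_real_zero {I : Oct} (hI : I ∈ Sph) {h : (Fin n → ℝ) × (Fin n → ℝ) → Oct}
    {O : Set ((Fin n → ℝ) × (Fin n → ℝ))}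
    (hdiff : ∀ p ∈ O, DifferentiableAt ℝ h p)
    (hcr : ∀ p ∈ O, ∀ m : Fin n,
      fderiv ℝ h p (Pi.single m 1, 0) + I * fderiv ℝ h p (0, Pi.single m 1) = 0)
    {x₀ : Fin n → ℝ} {ε : ℝ}
    (hball : Metric.ball ((x₀, 0) : (Fin n → ℝ) × (Fin n → ℝ)) ε ⊆ O)
    (hreal : ∀ x' : Fin n → ℝ,
      ((x', 0) : (Fin n → ℝ) × (Fin n → ℝ)) ∈ Metric.ball ((x₀, 0) : (Fin n → ℝ) × (Fin n → ℝ)) ε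
      → h (x', 0) = 0) :
    ∀ p ∈ Metric.ball ((x₀, 0) : (Fin n → ℝ) × (Fin n → ℝ)) ε, h p = 0 := by
  set c : (Fin n → ℝ) × (Fin n → ℝ) := (x₀, 0) with hc
  have main : ∀ k : ℕ, ∀ p ∈ Metric.ball c ε, (∀ m : Fin n, k ≤ (m:ℕ) → p.2 m = 0) → h p = 0 := by
    intro k
    induction k with
    | zero =>
      intro p hp h0
      have hy : p.2 = 0 := funext fun m => h0 m (Nat.zero_le _)
      have hpp : p = (p.1, (0 : Fin n → ℝ)) := by
        rw [← hy]
      rw [hpp] at hp ⊢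
      exact hreal p.1 hp
    | succ k ih =>
      intro p hp h0
      by_cases hk : k < n
      · set kf : Fin n := ⟨k, hk⟩ with hkf
        set y' : Fin n → ℝ := Function.update p.2 kf 0 with hy'
        set p₀ : (Fin n → ℝ) × (Fin n → ℝ) := (p.1, y') with hp₀def
        have hy'le : ‖y'‖ ≤ ‖p.2‖ := by
          rw [pi_norm_le_iff_of_nonneg (norm_nonneg p.2)]
          intro m
          by_cases hm : m = kf
          · rw [hy', hm]
            simp only [Function.update_self]
            simp [norm_nonneg]
          · rw [hy']
            simp only [Function.update_of_ne hm]
            exact norm_le_pi_norm p.2 m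
        have hp₀ : p₀ ∈ Metric.ball c ε := by
          rw [Metric.mem_ball] at hp ⊢
          have h1 : dist p₀ c ≤ dist p c := by
            rw [Prod.dist_eq, Prod.dist_eq]
            apply max_le_max le_rfl
            rw [dist_eq_norm, dist_eq_norm]
            simpa [hc, hp₀def] using hy'le
          exact lt_of_le_of_lt h1 hp
        set u : (Fin n → ℝ) × (Fin n → ℝ) := (Pi.single kf 1, 0) with hudef
        set T : Set ℂ := lineL p₀ u ⁻¹' Metric.ball c ε with hT
        have hTopen : IsOpen T := (Metric.isOpen_ball).preimage (continuous_lineL p₀ u)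
        have hTconv : Convex ℝ T := convex_lineL_preimage p₀ u (convex_ball c ε)
        have h0T : (0 : ℂ) ∈ T := by
          simp only [hT, Set.mem_preimage, lineL_zero]; exact hp₀
        have hy'cond : ∀ m : Fin n, k ≤ (m:ℕ) → y' m = 0 := by
          intro m hm
          by_cases hmk : m = kf
          · rw [hy', hmk]; simp
          · rw [hy']
            rw [Function.update_of_ne hmk]
            apply h0
            have : (m : ℕ) ≠ k := fun hc' => hmk (Fin.ext hc')
            omega
        have hfreq : ∃ᶠ z in 𝓝[≠] (0:ℂ), h (lineL p₀ u z) = 0 := by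
          obtain ⟨δ, hδpos, hδ⟩ := Metric.eventually_nhds_iff.mp
            ((continuous_lineL p₀ u).continuousAt.eventually_mem
              (by rw [lineL_zero]; exact Metric.isOpen_ball.mem_nhds hp₀))
          rw [Filter.frequently_iff]
          intro U hU
          obtain ⟨r, hrpos, hr⟩ := Metric.mem_nhdsWithin_iff.mp hU
          set t : ℝ := min δ r / 2 with ht
          have htpos : 0 < t := by positivity
          have htlt : t < δ ∧ t < r := by
            constructor <;> [skip; skip] <;>
            · rw [ht]
              have := min_le_left δ r
              have := min_le_right δ r
              linarith [lt_min hδpos hrpos]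
          refine ⟨(t : ℂ), ?_, ?_⟩
          · apply hr
            constructor
            · rw [Metric.mem_ball, dist_zero_right]
              rw [Complex.norm_real, Real.norm_eq_abs, abs_of_pos htpos]
              exact htlt.2
            · simp only [Set.mem_compl_iff, Set.mem_singleton_iff]
              exact_mod_cast ne_of_gt htpos
          · have hmem : lineL p₀ u (t : ℂ) ∈ Metric.ball c ε := by
              apply hδ
              rw [dist_zero_right, Complex.norm_real, Real.norm_eq_abs, abs_of_pos htpos]
              exact htlt.1
            have hmem' : (p₀ + t • u) ∈ Metric.ball c ε := by
              rw [← lineL_real]; exact hmem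
            rw [lineL_real]
            refine ih _ hmem' ?_
            intro m hm
            show (p₀ + t • u).2 m = 0
            rw [hudef]
            simp only [Prod.snd_add, Prod.smul_snd, smul_zero, add_zero]
            exact hy'cond m hm
        set z₁ : ℂ := (p.2 kf) • Complex.I with hz₁
        have hline₁ : lineL p₀ u z₁ = p := by
          rw [lineL]
          have hre : z₁.re = 0 := by rw [hz₁]; simp
          have him : z₁.im = p.2 kf := by rw [hz₁]; simp
          rw [hre, him, zero_smul, add_zero]
          apply Prod.ext
          · show p.1 + (p.2 kf) • (-u.2) = p.1
            rw [hudef]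
            simp
          · show y' + (p.2 kf) • u.1 = p.2
            rw [hudef, hy']
            funext m
            by_cases hm : m = kf
            · subst hm
              simp
            · simp [Function.update_of_ne hm, Pi.single_apply, hm]
        have h1T : z₁ ∈ T := by
          simp only [hT, Set.mem_preimage, hline₁]; exact hp
        have := line_zero hI hdiff hcr p₀ u hTopen hTconv.isPreconnected
          (fun z hz => hball hz) h0T hfreq z₁ h1T
        rw [hline₁] at this
        exact this
      · exact ih p hp fun m hm => absurd hm (by omega)
  intro p hp
  exact main n p hp fun m hm => absurd hm (by omega)

end Analytic


section Engine
open Oct Metric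

variable {n : ℕ}

/-- The identity-principle engine: a function on a slice-preconnected slice-open set,
slice-holomorphic on every slice and vanishing on a nonempty open piece of one slice,
vanishes identically. -/
lemma main_engine {Ω : Set (Fin n → Oct)} (hΩopen : IsOpen[τs n] Ω)
    (hΩconn : @IsPreconnected _ (τs n) Ω) (d : (Fin n → Oct) → Oct)
    (hdiff : ∀ K, K ∈ Sph → ∀ p ∈ {p : (Fin n → ℝ) × (Fin n → ℝ) | aff p.1 p.2 K ∈ Ω},
      DifferentiableAt ℝ (fun p : (Fin n → ℝ) × (Fin n → ℝ) => d (aff p.1 p.2 K)) p)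
    (hcr : ∀ K, K ∈ Sph → ∀ p ∈ {p : (Fin n → ℝ) × (Fin n → ℝ) | aff p.1 p.2 K ∈ Ω},
      ∀ m : Fin n,
      fderiv ℝ (fun p : (Fin n → ℝ) × (Fin n → ℝ) => d (aff p.1 p.2 K)) p (Pi.single m 1, 0)
        + K * fderiv ℝ (fun p : (Fin n → ℝ) × (Fin n → ℝ) => d (aff p.1 p.2 K)) p
            (0, Pi.single m 1) = 0)
    (seed : ∃ K, K ∈ Sph ∧ ∃ W : Set ((Fin n → ℝ) × (Fin n → ℝ)), W.Nonempty ∧ IsOpen W ∧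
      ∀ p ∈ W, aff p.1 p.2 K ∈ Ω ∧ d (aff p.1 p.2 K) = 0) :
    ∀ q ∈ Ω, d q = 0 := by
  classical
  set U : Oct → Set ((Fin n → ℝ) × (Fin n → ℝ)) :=
    fun K => {p | aff p.1 p.2 K ∈ Ω} with hUdef
  have hUopen : ∀ K, K ∈ Sph → IsOpen (U K) := fun K hK => isOpen_tau_iff.mp hΩopen K hK
  set S : Oct → Set ((Fin n → ℝ) × (Fin n → ℝ)) :=
    fun K => {p | p ∈ U K ∧ d (aff p.1 p.2 K) = 0} with hSdef
  set Z : Oct → Set ((Fin n → ℝ) × (Fin n → ℝ)) := fun K => interior (S K) with hZdef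
  have hZopen : ∀ K, IsOpen (Z K) := fun K => isOpen_interior
  have hZsub : ∀ K, Z K ⊆ S K := fun K => interior_subset
  -- closure property within a slice
  have hZclosed : ∀ K, K ∈ Sph → ∀ p ∈ U K, p ∈ closure (Z K) → p ∈ Z K := by
    intro K hK p hp hpc
    obtain ⟨ε, hεpos, hεsub⟩ := Metric.isOpen_iff.mp (hUopen K hK) p hp
    obtain ⟨q, hqball, hqZ⟩ :=
      mem_closure_iff.mp hpc _ Metric.isOpen_ball (Metric.mem_ball_self hεpos)
    obtain ⟨δ0, hδ0pos, hδ0⟩ := Metric.isOpen_iff.mp (hZopen K) q hqZ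
    set δ := min δ0 (ε - dist q p) with hδdef
    have hqp : dist q p < ε := Metric.mem_ball.mp hqball
    have hδpos : 0 < δ := lt_min hδ0pos (by linarith)
    have hδball : Metric.ball q δ ⊆ Metric.ball p ε := by
      intro w hw
      rw [Metric.mem_ball] at hw ⊢
      have h1 : dist w p ≤ dist w q + dist q p := dist_triangle w q p
      have h2 : δ ≤ ε - dist q p := min_le_right _ _
      linarith
    have hzero : ∀ w ∈ Metric.ball q δ, d (aff w.1 w.2 K) = 0 := fun w hw =>
      (hZsub K (hδ0 (Metric.ball_subset_ball (min_le_left _ _) hw))).2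
    have hball0 := zero_on_ball hK (hdiff K hK) (hcr K hK) hεsub hδpos hδball hzero
    have : Metric.ball p ε ⊆ S K := fun w hw => ⟨hεsub hw, hball0 w hw⟩
    exact interior_maximal this Metric.isOpen_ball (Metric.mem_ball_self hεpos)
  -- real points transfer between slices
  have hreal_trans : ∀ J, J ∈ Sph → ∀ K, K ∈ Sph → ∀ x : Fin n → ℝ,
      ((x, 0) : (Fin n → ℝ) × (Fin n → ℝ)) ∈ Z J → ((x, 0) : _) ∈ Z K := by
    intro J hJ K hK x hxZ
    have hxU : ((x, 0) : (Fin n → ℝ) × (Fin n → ℝ)) ∈ U K := by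
      have h1 : ((x, 0) : (Fin n → ℝ) × (Fin n → ℝ)) ∈ U J := (hZsub J hxZ).1
      show aff x 0 K ∈ Ω
      rw [aff_zero]
      have h2 : aff x 0 J ∈ Ω := h1
      rwa [aff_zero] at h2
    obtain ⟨ε1, hε1, hsub1⟩ := Metric.isOpen_iff.mp (hUopen K hK) _ hxU
    obtain ⟨ε2, hε2, hsub2⟩ := Metric.isOpen_iff.mp (hZopen J) _ hxZ
    set ε := min ε1 ε2 with hεdef
    have hεpos : 0 < ε := lt_min hε1 hε2
    have hballU : Metric.ball ((x, 0) : (Fin n → ℝ) × (Fin n → ℝ)) ε ⊆ U K :=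
      (Metric.ball_subset_ball (min_le_left _ _)).trans hsub1
    have hrealzero : ∀ x' : Fin n → ℝ,
        ((x', 0) : (Fin n → ℝ) × (Fin n → ℝ)) ∈ Metric.ball ((x, 0) : _) ε →
        d (aff x' 0 K) = 0 := by
      intro x' hx'
      have hx'Z : ((x', 0) : (Fin n → ℝ) × (Fin n → ℝ)) ∈ Z J :=
        hsub2 (Metric.ball_subset_ball (min_le_right _ _) hx')
      have := (hZsub J hx'Z).2
      rw [aff_zero] at this ⊢
      exact this
    have hvan := zero_of_real_zero hK (hdiff K hK) (hcr K hK) hballU hrealzero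
    have : Metric.ball ((x, 0) : (Fin n → ℝ) × (Fin n → ℝ)) ε ⊆ S K :=
      fun w hw => ⟨hballU hw, hvan w hw⟩
    exact interior_maximal this Metric.isOpen_ball (Metric.mem_ball_self hεpos)
  -- reflection
  have hZneg : ∀ K, ∀ p : (Fin n → ℝ) × (Fin n → ℝ), p ∈ Z (-K) → ((p.1, -p.2) : _) ∈ Z K := by
    intro K p hp
    set σh : ((Fin n → ℝ) × (Fin n → ℝ)) ≃ₜ ((Fin n → ℝ) × (Fin n → ℝ)) :=
      (Homeomorph.refl (Fin n → ℝ)).prodCongr (Homeomorph.neg (Fin n → ℝ)) with hσdef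
    have hσ : ∀ w : (Fin n → ℝ) × (Fin n → ℝ), σh w = (w.1, -w.2) := fun w => rfl
    have hSneg : S (-K) = σh ⁻¹' (S K) := by
      ext w
      simp only [hSdef, Set.mem_setOf_eq, Set.mem_preimage, hσ, hUdef]
      rw [show aff w.1 w.2 (-K) = aff w.1 (-w.2) K from aff_negI w.1 w.2 K]
    have : Z (-K) = σh ⁻¹' (Z K) := by
      rw [hZdef]
      show interior (S (-K)) = _
      rw [hSneg, σh.preimage_interior]
    rw [this] at hp
    exact hp
  -- the union set A
  set A : Set (Fin n → Oct) := ⋃ (K : Oct) (_ : K ∈ Sph),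
    (fun p : (Fin n → ℝ) × (Fin n → ℝ) => aff p.1 p.2 K) '' Z K with hAdef
  have hAmem : ∀ q, q ∈ A ↔ ∃ K, K ∈ Sph ∧ ∃ p, p ∈ Z K ∧ aff p.1 p.2 K = q := by
    intro q
    constructor
    · intro hq
      obtain ⟨K, hK, w, hwZ, hwq⟩ := by
        simpa only [hAdef, Set.mem_iUnion, Set.mem_image, exists_prop] using hq
      exact ⟨K, hK, w, hwZ, hwq⟩
    · rintro ⟨K, hK, p, hpZ, rfl⟩
      rw [hAdef]
      exact Set.mem_iUnion.mpr ⟨K, Set.mem_iUnion.mpr ⟨hK, ⟨p, hpZ, rfl⟩⟩⟩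
  have hAsubΩ : A ⊆ Ω := by
    intro q hq
    obtain ⟨K, hK, p, hp, rfl⟩ := (hAmem q).mp hq
    exact (hZsub K hp).1
  have hAzero : ∀ q ∈ A, d q = 0 := by
    intro q hq
    obtain ⟨K, hK, p, hp, rfl⟩ := (hAmem q).mp hq
    exact (hZsub K hp).2
  -- preimage of A in each slice is exactly Z K
  have hApre : ∀ K, K ∈ Sph → {p : (Fin n → ℝ) × (Fin n → ℝ) | aff p.1 p.2 K ∈ A} = Z K := by
    intro K hK
    ext p
    simp only [Set.mem_setOf_eq]
    constructor
    · intro hmem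
      obtain ⟨J, hJ, p', hp'Z, haff⟩ := (hAmem _).mp hmem
      by_cases hJK : J = K
      · subst hJK
        obtain ⟨hx, hy⟩ := aff_inj hJ haff
        have : p' = p := Prod.ext hx hy
        rwa [← this]
      · by_cases hJK' : J = -K
        · subst hJK'
          rw [aff_negI] at haff
          obtain ⟨hx, hy⟩ := aff_inj hK haff
          have hres := hZneg K p' hp'Z
          have : ((p'.1, -p'.2) : (Fin n → ℝ) × (Fin n → ℝ)) = p := Prod.ext hx hy
          rwa [← this]
        · have hKJ : K ≠ J := fun hh => hJK hh.symm
          have hKJ' : K ≠ -J := by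
            intro hh
            apply hJK'
            rw [hh, neg_neg]
          obtain ⟨hy0, hy'0, hx⟩ := aff_cross hJ hK hKJ hKJ' haff.symm
          have hp'eq : p' = ((p.1, 0) : (Fin n → ℝ) × (Fin n → ℝ)) := Prod.ext hx.symm hy'0
          rw [hp'eq] at hp'Z
          have := hreal_trans J hJ K hK p.1 hp'Z
          have hpeq : p = ((p.1, 0) : (Fin n → ℝ) × (Fin n → ℝ)) := Prod.ext rfl hy0
          rwa [← hpeq] at this
    · intro hp
      exact (hAmem _).mpr ⟨K, hK, p, hp, rfl⟩
  have hAopen : IsOpen[τs n] A := by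
    rw [isOpen_tau_iff]
    intro K hK
    rw [hApre K hK]
    exact hZopen K
  set B : Set (Fin n → Oct) := Ω \ A with hBdef
  have hBopen : IsOpen[τs n] B := by
    rw [isOpen_tau_iff]
    intro K hK
    have heq : {p : (Fin n → ℝ) × (Fin n → ℝ) | aff p.1 p.2 K ∈ B}
        = U K ∩ (closure (Z K))ᶜ := by
      ext p
      simp only [hBdef, Set.mem_diff, Set.mem_setOf_eq, Set.mem_inter_iff, Set.mem_compl_iff]
      constructor
      · rintro ⟨hpU, hpA⟩
        refine ⟨hpU, fun hcl => hpA ?_⟩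
        have hmem : p ∈ Z K := hZclosed K hK p hpU hcl
        have hmem2 : p ∈ {w : (Fin n → ℝ) × (Fin n → ℝ) | aff w.1 w.2 K ∈ A} := by
          rw [hApre K hK]; exact hmem
        exact hmem2
      · rintro ⟨hpU, hpcl⟩
        refine ⟨hpU, fun hpA => hpcl ?_⟩
        have hmem2 : p ∈ {w : (Fin n → ℝ) × (Fin n → ℝ) | aff w.1 w.2 K ∈ A} := hpA
        rw [hApre K hK] at hmem2
        exact subset_closure hmem2
    rw [heq]
    exact (hUopen K hK).inter isClosed_closure.isOpen_compl
  -- nonemptiness of A from the seed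
  have hAne : (Ω ∩ A).Nonempty := by
    obtain ⟨K, hK, W, ⟨w, hw⟩, hWopen, hWprop⟩ := seed
    have hWZ : W ⊆ Z K :=
      interior_maximal (fun p hp => ⟨(hWprop p hp).1, (hWprop p hp).2⟩) hWopen
    have hin : aff w.1 w.2 K ∈ A := (hAmem _).mpr ⟨K, hK, w, hWZ hw, rfl⟩
    exact ⟨aff w.1 w.2 K, hAsubΩ hin, hin⟩
  -- conclude by slice-preconnectedness
  intro q hq
  by_contra hd0
  have hqA : q ∉ A := fun hqA => hd0 (hAzero q hqA)
  have hBne : (Ω ∩ B).Nonempty := ⟨q, hq, hq, hqA⟩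
  have hcover : Ω ⊆ A ∪ B := fun w hw => (em (w ∈ A)).elim Or.inl fun h => Or.inr ⟨hw, h⟩
  obtain ⟨w, _, hwA, _, hwB⟩ := hΩconn A B hAopen hBopen hcover hAne hBne
  exact hwB hwA

end Engine


section Wrap
open Oct

/-- Strong slice regularity implies weak slice regularity on slice-open sets. -/
lemma strong_to_weak {n : ℕ} {Ω : Set (Fin n → Oct)} {f : (Fin n → Oct) → Oct}
    (hopen : IsOpen[τs n] Ω) (hs : SSliceReg n Ω f) : WSliceReg n Ω f := by
  obtain ⟨F, ⟨Uo, G, hUo, hs1U, hEq, hGC1, hGcr⟩, hrep⟩ := hs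
  intro K hK
  have hUKopen : IsOpen {p : (Fin n → ℝ) × (Fin n → ℝ) | aff p.1 p.2 K ∈ Ω} :=
    isOpen_tau_iff.mp hopen K hK
  have hUKsub : {p : (Fin n → ℝ) × (Fin n → ℝ) | aff p.1 p.2 K ∈ Ω} ⊆ s1 Ω :=
    fun p hp => ⟨K, hK, hp⟩
  have hUKU : {p : (Fin n → ℝ) × (Fin n → ℝ) | aff p.1 p.2 K ∈ Ω} ⊆ Uo :=
    fun p hp => hs1U (hUKsub hp)
  set combo : Oct × Oct →L[ℝ] Oct :=
    (ContinuousLinearMap.fst ℝ Oct Oct)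
      + (LIc K).comp (ContinuousLinearMap.snd ℝ Oct Oct) with hcombo
  have hcombo_apply : ∀ w : Oct × Oct, combo w = w.1 + K * w.2 := fun w => rfl
  have heq' : Set.EqOn (fun p : (Fin n → ℝ) × (Fin n → ℝ) => f (aff p.1 p.2 K))
      (fun p => combo (G p)) {p : (Fin n → ℝ) × (Fin n → ℝ) | aff p.1 p.2 K ∈ Ω} := by
    intro p hp
    show f (aff p.1 p.2 K) = combo (G p)
    rw [hcombo_apply, hEq (hUKsub hp), hrep p.1 p.2 K hK hp]
  constructor
  · exact ContDiffOn.congr (combo.contDiff.comp_contDiffOn (hGC1.mono hUKU)) heq'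
  · intro p hp m
    have hmem : Uo ∈ 𝓝 p := hUo.mem_nhds (hUKU hp)
    have hGd : HasFDerivAt G (fderiv ℝ G p) p :=
      ((hGC1.differentiableOn one_ne_zero).differentiableAt hmem).hasFDerivAt
    have hφd : HasFDerivAt (fun p => combo (G p)) (combo.comp (fderiv ℝ G p)) p :=
      combo.hasFDerivAt.comp p hGd
    have hfd : fderiv ℝ (fun p : (Fin n → ℝ) × (Fin n → ℝ) => f (aff p.1 p.2 K)) p
        = combo.comp (fderiv ℝ G p) := by
      have hev : (fun p : (Fin n → ℝ) × (Fin n → ℝ) => f (aff p.1 p.2 K))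
          =ᶠ[𝓝 p] (fun p => combo (G p)) :=
        Filter.eventuallyEq_of_mem (hUKopen.mem_nhds hp) heq'
      rw [hev.fderiv_eq]
      exact hφd.fderiv
    rw [hfd]
    have hstem := hGcr p (hUKU hp) m
    set D := fderiv ℝ G p with hD
    have h1 : (D (Pi.single m 1, 0)).1 - (D (0, Pi.single m 1)).2 = 0 := by
      have := congrArg Prod.fst hstem
      simpa [sigma2, sub_eq_add_neg] using this
    have h2 : (D (Pi.single m 1, 0)).2 + (D (0, Pi.single m 1)).1 = 0 := by
      have := congrArg Prod.snd hstem
      simpa [sigma2] using this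
    show combo (D (Pi.single m 1, 0)) + K * combo (D (0, Pi.single m 1)) = 0
    rw [hcombo_apply, hcombo_apply, Oct.mul_add_left, Oct.LIsq hK]
    have e1 : (D (Pi.single m 1, 0)).1 = (D (0, Pi.single m 1)).2 := sub_eq_zero.mp h1
    have e2 : (D (Pi.single m 1, 0)).2 = -(D (0, Pi.single m 1)).1 :=
      add_eq_zero_iff_eq_neg.mp h2
    rw [e1, e2, Oct.mul_neg_left]
    abel

end Wrap


/-- **Identity Principle.** Two functions on a slice-domain,
both weak slice regular or both strong slice regular, coinciding on a nonempty
open subset of a slice `Ω_I` (or of `Ω ∩ ℝⁿ`), coincide on all of `Ω`. -/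
theorem identity_principle (n : ℕ) (hn : 1 ≤ n)
    (Ω : Set (Fin n → Oct)) (hΩ : SliceDomain n Ω)
    (f g : (Fin n → Oct) → Oct)
    (hreg : (WSliceReg n Ω f ∧ WSliceReg n Ω g) ∨ (SSliceReg n Ω f ∧ SSliceReg n Ω g))
    (hcoin :
      (∃ I ∈ Sph, ∃ V : Set ((Fin n → ℝ) × (Fin n → ℝ)), V.Nonempty ∧ IsOpen V ∧
        (∀ p ∈ V, aff p.1 p.2 I ∈ Ω) ∧
        ∀ p ∈ V, f (aff p.1 p.2 I) = g (aff p.1 p.2 I)) ∨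
      (∃ V : Set (Fin n → ℝ), V.Nonempty ∧ IsOpen V ∧ (∀ x ∈ V, ofRealn x ∈ Ω) ∧
        ∀ x ∈ V, f (ofRealn x) = g (ofRealn x))) :
    ∀ q ∈ Ω, f q = g q := by
  classical
  have hΩopen : IsOpen[τs n] Ω := hΩ.1.2
  have hΩconn : @IsPreconnected _ (τs n) Ω := hΩ.2.2
  have hW : WSliceReg n Ω f ∧ WSliceReg n Ω g := by
    rcases hreg with h | h
    · exact h
    · exact ⟨strong_to_weak hΩopen h.1, strong_to_weak hΩopen h.2⟩
  obtain ⟨hWf, hWg⟩ := hW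
  have hUopen : ∀ K, K ∈ Sph →
      IsOpen {p : (Fin n → ℝ) × (Fin n → ℝ) | aff p.1 p.2 K ∈ Ω} :=
    fun K hK => isOpen_tau_iff.mp hΩopen K hK
  set d : (Fin n → Oct) → Oct := fun q => f q - g q with hddef
  have hdAt : ∀ K, K ∈ Sph → ∀ p ∈ {p : (Fin n → ℝ) × (Fin n → ℝ) | aff p.1 p.2 K ∈ Ω},
      DifferentiableAt ℝ (fun p : (Fin n → ℝ) × (Fin n → ℝ) => f (aff p.1 p.2 K)) p ∧
      DifferentiableAt ℝ (fun p : (Fin n → ℝ) × (Fin n → ℝ) => g (aff p.1 p.2 K)) p := by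
    intro K hK p hp
    constructor
    · exact ((hWf K hK).1.differentiableOn one_ne_zero).differentiableAt
        ((hUopen K hK).mem_nhds hp)
    · exact ((hWg K hK).1.differentiableOn one_ne_zero).differentiableAt
        ((hUopen K hK).mem_nhds hp)
  have hdiff : ∀ K, K ∈ Sph → ∀ p ∈ {p : (Fin n → ℝ) × (Fin n → ℝ) | aff p.1 p.2 K ∈ Ω},
      DifferentiableAt ℝ (fun p : (Fin n → ℝ) × (Fin n → ℝ) => d (aff p.1 p.2 K)) p := by
    intro K hK p hp
    obtain ⟨h1, h2⟩ := hdAt K hK p hp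
    exact h1.sub h2
  have hcr : ∀ K, K ∈ Sph → ∀ p ∈ {p : (Fin n → ℝ) × (Fin n → ℝ) | aff p.1 p.2 K ∈ Ω},
      ∀ m : Fin n,
      fderiv ℝ (fun p : (Fin n → ℝ) × (Fin n → ℝ) => d (aff p.1 p.2 K)) p (Pi.single m 1, 0)
        + K * fderiv ℝ (fun p : (Fin n → ℝ) × (Fin n → ℝ) => d (aff p.1 p.2 K)) p
            (0, Pi.single m 1) = 0 := by
    intro K hK p hp m
    obtain ⟨h1, h2⟩ := hdAt K hK p hp
    have hsub : fderiv ℝ (fun p : (Fin n → ℝ) × (Fin n → ℝ) => d (aff p.1 p.2 K)) p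
        = fderiv ℝ (fun p : (Fin n → ℝ) × (Fin n → ℝ) => f (aff p.1 p.2 K)) p
          - fderiv ℝ (fun p : (Fin n → ℝ) × (Fin n → ℝ) => g (aff p.1 p.2 K)) p :=
      fderiv_sub h1 h2
    rw [hsub]
    simp only [ContinuousLinearMap.sub_apply]
    rw [Oct.mul_sub_left]
    have c1 := (hWf K hK).2 p hp m
    have c2 := (hWg K hK).2 p hp m
    calc fderiv ℝ (fun p : (Fin n → ℝ) × (Fin n → ℝ) => f (aff p.1 p.2 K)) p (Pi.single m 1, 0)
          - fderiv ℝ (fun p : (Fin n → ℝ) × (Fin n → ℝ) => g (aff p.1 p.2 K)) p (Pi.single m 1, 0)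
          + (K * fderiv ℝ (fun p : (Fin n → ℝ) × (Fin n → ℝ) => f (aff p.1 p.2 K)) p (0, Pi.single m 1)
            - K * fderiv ℝ (fun p : (Fin n → ℝ) × (Fin n → ℝ) => g (aff p.1 p.2 K)) p (0, Pi.single m 1))
        = (fderiv ℝ (fun p : (Fin n → ℝ) × (Fin n → ℝ) => f (aff p.1 p.2 K)) p (Pi.single m 1, 0)
            + K * fderiv ℝ (fun p : (Fin n → ℝ) × (Fin n → ℝ) => f (aff p.1 p.2 K)) p (0, Pi.single m 1))
          - (fderiv ℝ (fun p : (Fin n → ℝ) × (Fin n → ℝ) => g (aff p.1 p.2 K)) p (Pi.single m 1, 0)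
            + K * fderiv ℝ (fun p : (Fin n → ℝ) × (Fin n → ℝ) => g (aff p.1 p.2 K)) p (0, Pi.single m 1)) := by
          abel
      _ = 0 := by rw [c1, c2, sub_zero]
  have seed : ∃ K, K ∈ Sph ∧ ∃ W : Set ((Fin n → ℝ) × (Fin n → ℝ)), W.Nonempty ∧ IsOpen W ∧
      ∀ p ∈ W, aff p.1 p.2 K ∈ Ω ∧ d (aff p.1 p.2 K) = 0 := by
    rcases hcoin with ⟨I, hI, V, hVne, hVopen, hVΩ, hVeq⟩ | ⟨V, ⟨x₀, hx₀⟩, hVopen, hVΩ, hVeq⟩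
    · exact ⟨I, hI, V, hVne, hVopen,
        fun p hp => ⟨hVΩ p hp, sub_eq_zero.mpr (hVeq p hp)⟩⟩
    · obtain ⟨I₀, hI₀⟩ := Oct.sph_nonempty
      have hxU : ((x₀, 0) : (Fin n → ℝ) × (Fin n → ℝ))
          ∈ {p : (Fin n → ℝ) × (Fin n → ℝ) | aff p.1 p.2 I₀ ∈ Ω} := by
        show aff x₀ 0 I₀ ∈ Ω
        rw [aff_zero]
        exact hVΩ x₀ hx₀
      obtain ⟨ε1, hε1, hsub1⟩ := Metric.isOpen_iff.mp (hUopen I₀ hI₀) _ hxU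
      obtain ⟨ε2, hε2, hsub2⟩ := Metric.isOpen_iff.mp hVopen x₀ hx₀
      set ε := min ε1 ε2 with hεdef
      have hεpos : 0 < ε := lt_min hε1 hε2
      have hballU : Metric.ball ((x₀, 0) : (Fin n → ℝ) × (Fin n → ℝ)) ε
          ⊆ {p : (Fin n → ℝ) × (Fin n → ℝ) | aff p.1 p.2 I₀ ∈ Ω} :=
        (Metric.ball_subset_ball (min_le_left _ _)).trans hsub1
      have hrealzero : ∀ x' : Fin n → ℝ,
          ((x', 0) : (Fin n → ℝ) × (Fin n → ℝ)) ∈ Metric.ball ((x₀, 0) : _) ε →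
          d (aff x' 0 I₀) = 0 := by
        intro x' hx'
        have hd1 : dist x' x₀ < ε := by
          have h := Metric.mem_ball.mp hx'
          rw [Prod.dist_eq] at h
          exact lt_of_le_of_lt (le_max_left _ _) h
        have hx'V : x' ∈ V := hsub2 (Metric.mem_ball.mp (by
          rw [Metric.mem_ball]
          exact lt_of_lt_of_le hd1 (min_le_right _ _)))
        rw [aff_zero]
        exact sub_eq_zero.mpr (hVeq x' hx'V)
      have hvan := zero_of_real_zero hI₀ (hdiff I₀ hI₀) (hcr I₀ hI₀) hballU hrealzero
      exact ⟨I₀, hI₀, Metric.ball ((x₀, 0) : (Fin n → ℝ) × (Fin n → ℝ)) ε,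
        ⟨_, Metric.mem_ball_self hεpos⟩, Metric.isOpen_ball,
        fun p hp => ⟨hballU hp, hvan p hp⟩⟩
  intro q hq
  exact sub_eq_zero.mp (main_engine hΩopen hΩconn d hdiff hcr seed q hq)


end
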